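/- Every solution of Kamke's ODE 120, t·y′(t) = y(t)·(t·ln(t²/y(t)) + 2) with t > 0 and y(t) > 0, is of the form y(t) = t²·exp(c·e^{−t}) for some real constant c; conversely, for every real c, the function y(t) = t²·exp(c·e^{−t}) solves the ODE for all t > 0. -/

import Mathlib

open Real

theorem stmt4 :
    (∀ y : ℝ → ℝ,
      (∀ t : ℝ, 0 < t → 0 < y t) →
      (∀ t : ℝ, 0 < t → DifferentiableAt ℝ y t) →
      (∀ t : ℝ, 0 < t →
        t * deriv y t = y t * (t * Real.log (t ^ 2 / y t) + 2)) →
      ∃ c : ℝ, ∀ t : ℝ, 0 < t → y t = t ^ 2 * Real.exp (c * Real.exp (-t)))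
    ∧ (∀ c : ℝ, ∀ t : ℝ, 0 < t →
        t * deriv (fun u : ℝ => u ^ 2 * Real.exp (c * Real.exp (-u))) t
          = (t ^ 2 * Real.exp (c * Real.exp (-t)))
            * (t * Real.log (t ^ 2 / (t ^ 2 * Real.exp (c * Real.exp (-t)))) + 2)) := by
  constructor
  · intro y hpos hdiff hode
    set g : ℝ → ℝ := fun t => Real.exp t * (Real.log (y t) - 2 * Real.log t) with hg
    have hgd : ∀ t : ℝ, 0 < t → HasDerivAt g 0 t := by
      intro t ht
      have hyt := hpos t ht
      have hdy : HasDerivAt y (deriv y t) t := (hdiff t ht).hasDerivAt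
      have hlog : HasDerivAt (fun s => Real.log (y s)) (deriv y t / y t) t :=
        hdy.log hyt.ne'
      have hlt : HasDerivAt (fun s : ℝ => 2 * Real.log s) (2 * t⁻¹) t :=
        (Real.hasDerivAt_log ht.ne').const_mul 2
      have hexp : HasDerivAt Real.exp (Real.exp t) t := Real.hasDerivAt_exp t
      have h : HasDerivAt (fun i => Real.exp i * (Real.log (y i) - 2 * Real.log i))
          (Real.exp t * (Real.log (y t) - 2 * Real.log t) + Real.exp t * (deriv y t / y t - 2 * t⁻¹)) t :=
        hexp.fun_mul (hlog.fun_sub hlt)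
      -- derivative value: exp t * (y'/y - 2/t) + exp t * (ln y - 2 ln t)
      have hode' : deriv y t / y t - 2 * t⁻¹ = 2 * Real.log t - Real.log (y t) := by
        have h0 := hode t ht
        have hlq : Real.log (t ^ 2 / y t) = 2 * Real.log t - Real.log (y t) := by
          rw [Real.log_div (pow_ne_zero 2 ht.ne') hyt.ne', Real.log_pow]
          push_cast; ring
        rw [hlq] at h0
        field_simp
        nlinarith [h0]
      convert h using 1
      rw [hode']
      ring
    have hconv : Convex ℝ (Set.Ioi (0:ℝ)) := convex_Ioi 0
    have hconst : ∀ t : ℝ, 0 < t → g t = g 1 := by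
      intro t ht
      have hdo : DifferentiableOn ℝ g (Set.Ioi 0) := fun x hx =>
        ((hgd x hx).differentiableAt).differentiableWithinAt
      have hf0 : ∀ x ∈ Set.Ioi (0:ℝ), fderivWithin ℝ g (Set.Ioi 0) x = 0 := by
        intro x hx
        rw [fderivWithin_of_isOpen isOpen_Ioi hx]
        have := (hgd x hx).hasFDerivAt.fderiv
        rw [this]; ext v
        simp
      exact hconv.is_const_of_fderivWithin_eq_zero hdo hf0 ht (by norm_num)
    refine ⟨g 1, fun t ht => ?_⟩
    have h1 : Real.log (y t) - 2 * Real.log t = g 1 * Real.exp (-t) := by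
      have h : Real.exp t * (Real.log (y t) - 2 * Real.log t) = g 1 := hconst t ht
      have h2 : Real.exp t ≠ 0 := (Real.exp_pos t).ne'
      rw [Real.exp_neg, ← h]
      field_simp
    have : Real.log (y t) = 2 * Real.log t + g 1 * Real.exp (-t) := by linarith
    have hyt := hpos t ht
    calc y t = Real.exp (Real.log (y t)) := (Real.exp_log hyt).symm
      _ = Real.exp (2 * Real.log t) * Real.exp (g 1 * Real.exp (-t)) := by
          rw [this, Real.exp_add]
      _ = t ^ 2 * Real.exp (g 1 * Real.exp (-t)) := by
          rw [show (2:ℝ) * Real.log t = Real.log t * 2 by ring, Real.exp_mul, Real.exp_log ht]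
          norm_num
  · intro c t ht
    have hE : HasDerivAt (fun u : ℝ => Real.exp (c * Real.exp (-u)))
        (Real.exp (c * Real.exp (-t)) * (c * (-Real.exp (-t)))) t := by
      have h1 : HasDerivAt (fun u : ℝ => c * Real.exp (-u)) (c * (-Real.exp (-t))) t := by
        have := (Real.hasDerivAt_exp (-t)).comp t (hasDerivAt_neg t)
        simpa [mul_comm] using this.const_mul c
      exact (Real.hasDerivAt_exp _).comp t h1
    have hP : HasDerivAt (fun u : ℝ => u ^ 2 * Real.exp (c * Real.exp (-u)))
        (2 * t * Real.exp (c * Real.exp (-t))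
          + t ^ 2 * (Real.exp (c * Real.exp (-t)) * (c * (-Real.exp (-t))))) t := by
      have hsq : HasDerivAt (fun u : ℝ => u ^ 2) (2 * t) t := by
        simpa using (hasDerivAt_pow 2 t)
      simpa using hsq.fun_mul hE
    rw [hP.deriv]
    have hlog : Real.log (t ^ 2 / (t ^ 2 * Real.exp (c * Real.exp (-t))))
        = -(c * Real.exp (-t)) := by
      have hE0 : Real.exp (c * Real.exp (-t)) ≠ 0 := (Real.exp_pos _).ne'
      rw [show t ^ 2 / (t ^ 2 * Real.exp (c * Real.exp (-t)))
          = (Real.exp (c * Real.exp (-t)))⁻¹ from by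
        field_simp, Real.log_inv, Real.log_exp]
    rw [hlog]
    ring
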